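/- arXiv:q-alg/9609024 — 3 statements merged into one kernel-verified Lean document; each statement's English description precedes it below -/
import Mathlib

section
/- For every triple of complex numbers (x, y, z) ∈ ℂ³ there exists a group homomorphism ρ : F₂ → SL(2,ℂ) from the free group on two generators a and b such that tr(ρ(a)) = x, tr(ρ(b)) = y, and tr(ρ(ab)) = z. -/
open Matrix

theorem trace_coordinates_surjective (x y z : ℂ) :
    ∃ ρ : FreeGroup (Fin 2) →* Matrix.SpecialLinearGroup (Fin 2) ℂ,
      Matrix.trace ((ρ (FreeGroup.of 0) : Matrix (Fin 2) (Fin 2) ℂ)) = x ∧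
      Matrix.trace ((ρ (FreeGroup.of 1) : Matrix (Fin 2) (Fin 2) ℂ)) = y ∧
      Matrix.trace ((ρ (FreeGroup.of 0 * FreeGroup.of 1) : Matrix (Fin 2) (Fin 2) ℂ)) = z := by
  obtain ⟨c, hc⟩ : ∃ c : ℂ, c ^ 2 - z * c + 1 = 0 := by
    have hd : (Polynomial.X ^ 2 - Polynomial.C z * Polynomial.X + 1 : Polynomial ℂ).degree = 2 := by
      compute_degree!
    obtain ⟨c, hc⟩ := IsAlgClosed.exists_root
      (Polynomial.X ^ 2 - Polynomial.C z * Polynomial.X + 1) (by rw [hd]; norm_num)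
    refine ⟨c, ?_⟩
    simpa [Polynomial.IsRoot] using hc
  have hc0 : c ≠ 0 := by
    intro h; rw [h] at hc; simp at hc
  have hsum : c⁻¹ + c = z := by
    field_simp
    linear_combination hc
  set A : Matrix.SpecialLinearGroup (Fin 2) ℂ :=
    ⟨!![x, -1; 1, 0], by simp [Matrix.det_fin_two_of]⟩
  set B : Matrix.SpecialLinearGroup (Fin 2) ℂ :=
    ⟨!![0, c; -c⁻¹, y], by simp [Matrix.det_fin_two_of, hc0]⟩
  refine ⟨FreeGroup.lift (fun i => if i = 0 then A else B), ?_, ?_, ?_⟩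
  · simp [A, Matrix.trace_fin_two_of]
  · simp [B, Matrix.trace_fin_two_of]
  · simp only [_root_.map_mul, FreeGroup.lift_apply_of, Matrix.SpecialLinearGroup.coe_mul]
    simp only [Fin.isValue, one_ne_zero, if_true, if_false, ↓reduceIte]
    norm_num [A, B, Matrix.trace_fin_two, Matrix.mul_apply, Fin.sum_univ_two]
    linear_combination hsum
end

section
/- The three trace functions τ_a, τ_b, τ_ab on the set Hom(F₂, SL(2,ℂ)) of group homomorphisms, defined by τ_a(ρ) = tr(ρ(a)), τ_b(ρ) = tr(ρ(b)), τ_ab(ρ) = tr(ρ(ab)), are algebraically independent over ℂ: if P is a polynomial in three variables with complex coefficients such that P(tr(ρ(a)), tr(ρ(b)), tr(ρ(ab))) = 0 for every homomorphism ρ : F₂ → SL(2,ℂ), then P is the zero polynomial. -/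
open Matrix

/-- Every complex number is `α + α⁻¹` for some nonzero α. -/
lemma exists_sum_inv (x : ℂ) : ∃ α α' : ℂ, α * α' = 1 ∧ α + α' = x := by
  obtain ⟨s, hs⟩ : ∃ s : ℂ, s ^ 2 = x ^ 2 - 4 :=
    IsAlgClosed.exists_pow_nat_eq (x ^ 2 - 4) (n := 2) (by norm_num)
  refine ⟨(x + s) / 2, (x - s) / 2, ?_, by ring⟩
  field_simp
  linear_combination -hs

theorem trace_coordinates_algebraically_independent
    (P : MvPolynomial (Fin 3) ℂ)
    (hP : ∀ ρ : FreeGroup (Fin 2) →* Matrix.SpecialLinearGroup (Fin 2) ℂ,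
      MvPolynomial.eval
        ![Matrix.trace ((ρ (FreeGroup.of 0) : Matrix (Fin 2) (Fin 2) ℂ)),
          Matrix.trace ((ρ (FreeGroup.of 1) : Matrix (Fin 2) (Fin 2) ℂ)),
          Matrix.trace ((ρ (FreeGroup.of 0 * FreeGroup.of 1) : Matrix (Fin 2) (Fin 2) ℂ))]
        P = 0) :
    P = 0 := by
  apply MvPolynomial.funext
  intro v
  simp only [map_zero]
  obtain ⟨α, α', hα1, hα2⟩ := exists_sum_inv (v 0)
  obtain ⟨β, β', hβ1, hβ2⟩ := exists_sum_inv (v 1)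
  set t : ℂ := v 2 - α * β - α' * β' with ht
  set A : Matrix.SpecialLinearGroup (Fin 2) ℂ :=
    ⟨!![α, 1; 0, α'], by simp [Matrix.det_fin_two_of, hα1]⟩ with hA
  set B : Matrix.SpecialLinearGroup (Fin 2) ℂ :=
    ⟨!![β, 0; t, β'], by simp [Matrix.det_fin_two_of, hβ1]⟩ with hB
  have h := hP (FreeGroup.lift ![A, B])
  have e0 : FreeGroup.lift ![A, B] (FreeGroup.of 0) = A := FreeGroup.lift_apply_of
  have e1 : FreeGroup.lift ![A, B] (FreeGroup.of 1) = B := FreeGroup.lift_apply_of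
  rw [_root_.map_mul, e0, e1] at h
  have hv : ![Matrix.trace (A : Matrix (Fin 2) (Fin 2) ℂ),
      Matrix.trace (B : Matrix (Fin 2) (Fin 2) ℂ),
      Matrix.trace ((A * B : Matrix.SpecialLinearGroup (Fin 2) ℂ) : Matrix (Fin 2) (Fin 2) ℂ)] = v := by
    funext i
    fin_cases i
    · simpa [hA, Matrix.trace_fin_two_of] using hα2
    · simpa [hB, Matrix.trace_fin_two_of] using hβ2
    · show _ = v 2
      rw [Matrix.SpecialLinearGroup.coe_mul]
      simp only [hA, hB, Matrix.mul_fin_two, Matrix.trace_fin_two_of]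
      ring_nf
      simp
      rw [ht]; ring
  rwa [hv] at h
end

section
/- Let G be a group and let ρ₁, ρ₂ : G → SL(2,ℂ) be group homomorphisms such that tr(ρ₁(g)) = tr(ρ₂(g)) for every g ∈ G. If ρ₁ is irreducible, i.e., there is no one-dimensional complex subspace L of ℂ² with ρ₁(g)(L) ⊆ L for all g ∈ G, then ρ₁ and ρ₂ are conjugate: there exists an invertible 2×2 complex matrix C such that ρ₂(g) = C ρ₁(g) C⁻¹ for all g ∈ G. -/
open Matrix

open Module

local notation "M₂" => Matrix (Fin 2) (Fin 2) ℂ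


private lemma trace_E_mul (y : M₂) (i j : Fin 2) :
    Matrix.trace (Matrix.single i j 1 * y) = y j i := by
  fin_cases i <;> fin_cases j <;>
    simp [Matrix.trace, Fin.sum_univ_two, Matrix.mul_apply, Matrix.single]

private lemma eq_zero_of_trace_mul (y : M₂) (h : ∀ x : M₂, Matrix.trace (x * y) = 0) :
    y = 0 := by
  ext i j
  have := h (Matrix.single j i 1)
  rw [trace_E_mul] at this
  simpa using this

private lemma matrix_eq_of_mulVec {A B : M₂} (h : ∀ v, A *ᵥ v = B *ᵥ v) : A = B := by
  ext i j
  have := congrFun (h (Pi.single j 1)) i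
  simpa [Matrix.mulVec_single] using this

noncomputable def PhiTr : M₂ →ₗ[ℂ] Module.Dual ℂ M₂ where
  toFun y := (Matrix.traceLinearMap (Fin 2) ℂ ℂ).comp (LinearMap.mulRight ℂ y)
  map_add' y z := by ext x; simp [Matrix.mul_add]
  map_smul' c y := by ext x; simp [Matrix.mul_smul]

@[simp] lemma PhiTr_apply (y x : M₂) : PhiTr y x = Matrix.trace (x * y) := rfl

lemma PhiTr_bijective : Function.Bijective PhiTr := by
  have hfin : Module.finrank ℂ M₂ = 4 := by simp [Module.finrank_matrix]
  have hinj : Function.Injective PhiTr := by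
    rw [← LinearMap.ker_eq_bot]
    refine (Submodule.eq_bot_iff _).mpr fun y hy => ?_
    refine eq_zero_of_trace_mul y fun x => ?_
    have : PhiTr y x = 0 := by rw [hy]; rfl
    simpa using this
  refine ⟨hinj, ?_⟩
  rw [← LinearMap.range_eq_top]
  apply Submodule.eq_top_of_finrank_eq
  rw [Subspace.dual_finrank_eq]
  have := LinearMap.finrank_range_add_finrank_ker PhiTr
  rw [LinearMap.ker_eq_bot.mpr hinj] at this
  simpa using this

section
variable {G : Type*} [Group G] (ρ₁ : G →* Matrix.SpecialLinearGroup (Fin 2) ℂ)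

lemma span_mul_closed :
    ∀ s ∈ Submodule.span ℂ (Set.range fun g => (ρ₁ g : M₂)),
    ∀ t ∈ Submodule.span ℂ (Set.range fun g => (ρ₁ g : M₂)),
      s * t ∈ Submodule.span ℂ (Set.range fun g => (ρ₁ g : M₂)) := by
  set S := Submodule.span ℂ (Set.range fun g => (ρ₁ g : M₂)) with hS
  have claim1 : ∀ s ∈ S, ∀ x ∈ Set.range (fun g => (ρ₁ g : M₂)), s * x ∈ S := by
    intro s hs x hx
    obtain ⟨h, rfl⟩ := hx
    induction hs using Submodule.span_induction with
    | mem z hz =>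
        obtain ⟨g, rfl⟩ := hz
        apply Submodule.subset_span
        exact ⟨g * h, by simp⟩
    | zero => simpa using S.zero_mem
    | add u v hu hv hu' hv' => rw [add_mul]; exact S.add_mem hu' hv'
    | smul c u hu hu' => rw [smul_mul_assoc]; exact S.smul_mem c hu'
  intro s hs t ht
  induction ht using Submodule.span_induction with
  | mem z hz => exact claim1 s hs z hz
  | zero => simpa using S.zero_mem
  | add u v hu hv hu' hv' => rw [mul_add]; exact S.add_mem hu' hv'
  | smul c u hu hu' => rw [mul_smul_comm]; exact S.smul_mem c hu'



lemma burnside_span (ρ₁ : G →* Matrix.SpecialLinearGroup (Fin 2) ℂ)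
    (hmul : ∀ s ∈ Submodule.span ℂ (Set.range fun g => (ρ₁ g : M₂)),
      ∀ t ∈ Submodule.span ℂ (Set.range fun g => (ρ₁ g : M₂)),
        s * t ∈ Submodule.span ℂ (Set.range fun g => (ρ₁ g : M₂)))
    (hPhi : Function.Bijective (PhiTr : M₂ →ₗ[ℂ] Module.Dual ℂ M₂))
    (hPhiA : ∀ y x : M₂, PhiTr y x = Matrix.trace (x * y))
    (hzt : ∀ y : M₂, (∀ x : M₂, Matrix.trace (x * y) = 0) → y = 0)
    (hirr : ¬ ∃ L : Submodule ℂ (Fin 2 → ℂ),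
      Module.finrank ℂ L = 1 ∧
        ∀ g : G, ∀ v ∈ L, Matrix.mulVec ((ρ₁ g : Matrix (Fin 2) (Fin 2) ℂ)) v ∈ L) :
    Submodule.span ℂ (Set.range fun g => (ρ₁ g : M₂)) = ⊤ := by
  set S := Submodule.span ℂ (Set.range fun g => (ρ₁ g : M₂)) with hSdef
  have hmem : ∀ g, (ρ₁ g : M₂) ∈ S := fun g => Submodule.subset_span ⟨g, rfl⟩
  have hone : (1 : M₂) ∈ S := by simpa using hmem 1
  by_contra hne
  have hlt : S < ⊤ := Ne.lt_top hne
  have hfin : Module.finrank ℂ (Matrix (Fin 2) (Fin 2) ℂ) = 4 := by simp [Module.finrank_matrix]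
  have hdim : Module.finrank ℂ S < 4 := hfin ▸ Submodule.finrank_lt hlt.ne
  by_cases hsc : ∀ g : G, ∃ c : ℂ, (ρ₁ g : M₂) = c • 1
  · refine hirr ⟨Submodule.span ℂ {Pi.single 0 1}, finrank_span_singleton ?_, ?_⟩
    · intro h; simpa using congrFun h 0
    · intro g v hv
      obtain ⟨c, hc⟩ := hsc g
      rw [hc, Matrix.smul_mulVec, Matrix.one_mulVec]
      exact Submodule.smul_mem _ _ hv
  · push_neg at hsc
    obtain ⟨g₀, ha⟩ := hsc
    set a : M₂ := (ρ₁ g₀ : M₂) with hadef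
    by_cases hb : ∀ s ∈ S, s ∈ Submodule.span ℂ {(1 : M₂), a}
    · obtain ⟨μ, hμ⟩ := Module.End.exists_eigenvalue (Matrix.mulVecLin a)
      obtain ⟨v, hv⟩ := hμ.exists_hasEigenvector
      have hav : a *ᵥ v = μ • v := by
        have := hv.apply_eq_smul
        rwa [Matrix.mulVecLin_apply] at this
      refine hirr ⟨Submodule.span ℂ {v}, finrank_span_singleton hv.2, ?_⟩
      intro g u hu
      obtain ⟨d, rfl⟩ := Submodule.mem_span_singleton.mp hu
      obtain ⟨α, β, hab⟩ := Submodule.mem_span_pair.mp (hb _ (hmem g))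
      rw [← hab, Matrix.mulVec_smul, Matrix.add_mulVec, Matrix.smul_mulVec,
        Matrix.smul_mulVec, Matrix.one_mulVec, hav]
      exact Submodule.smul_mem _ _ (Submodule.add_mem _
        (Submodule.smul_mem _ _ (Submodule.mem_span_singleton_self v))
        (Submodule.smul_mem _ _ (Submodule.smul_mem _ _
          (Submodule.mem_span_singleton_self v))))
    · push_neg at hb
      obtain ⟨b, hbS, hbn⟩ := hb
      -- finrank S = 3
      have hanotin : a ∉ Submodule.span ℂ {(1 : M₂)} := by
        intro h
        obtain ⟨c, hc⟩ := Submodule.mem_span_singleton.mp h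
        exact ha c hc.symm
      have c0 : (⊥ : Submodule ℂ M₂) < Submodule.span ℂ {(1 : M₂)} := by
        rw [bot_lt_iff_ne_bot, Ne, Submodule.span_singleton_eq_bot]
        exact one_ne_zero
      have c1 : Submodule.span ℂ {(1 : M₂)} < Submodule.span ℂ {(1 : M₂), a} :=
        SetLike.lt_iff_le_and_exists.mpr
          ⟨Submodule.span_mono (by simp), a,
            Submodule.subset_span (by simp), hanotin⟩
      have c2 : Submodule.span ℂ {(1 : M₂), a} < Submodule.span ℂ {(1 : M₂), a, b} :=
        SetLike.lt_iff_le_and_exists.mpr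
          ⟨Submodule.span_mono (by intro x hx; simp at hx; rcases hx with h | h <;> simp [h]),
            b, Submodule.subset_span (by simp), hbn⟩
      have hsub : Submodule.span ℂ {(1 : M₂), a, b} ≤ S := by
        rw [Submodule.span_le]
        intro x hx
        rcases hx with rfl | rfl | rfl
        · exact hone
        · exact hmem g₀
        · exact hbS
      have h3le : 3 ≤ Module.finrank ℂ S := by
        have f0 := Submodule.finrank_lt_finrank_of_lt (K := ℂ) c0
        have f1 := Submodule.finrank_lt_finrank_of_lt (K := ℂ) c1
        have f2 := Submodule.finrank_lt_finrank_of_lt (K := ℂ) c2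
        have f3 := Submodule.finrank_mono (R := ℂ) hsub
        simp [finrank_bot] at f0
        omega
      have hS3 : Module.finrank ℂ S = 3 := by omega
      have hq : Module.finrank ℂ (M₂ ⧸ S) = 1 := by
        have := Submodule.finrank_quotient_add_finrank S
        omega
      have hann : Module.finrank ℂ S.dualAnnihilator = 1 := by
        rw [← hq]
        exact ((Subspace.quotEquivAnnihilator S).finrank_eq).symm
      set Φe : M₂ ≃ₗ[ℂ] Module.Dual ℂ M₂ := LinearEquiv.ofBijective PhiTr hPhi with hΦe
      set Y : Submodule ℂ M₂ := S.dualAnnihilator.comap (Φe : M₂ →ₗ[ℂ] Module.Dual ℂ M₂)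
        with hYdef
      have hYmem : ∀ y : M₂, y ∈ Y ↔ ∀ s ∈ S, Matrix.trace (s * y) = 0 := by
        intro y
        rw [hYdef, Submodule.mem_comap, Submodule.mem_dualAnnihilator]
        constructor
        · intro h s hs; have := h s hs; rwa [hΦe, LinearEquiv.coe_coe,
            LinearEquiv.ofBijective_apply, hPhiA] at this
        · intro h s hs; rw [hΦe, LinearEquiv.coe_coe, LinearEquiv.ofBijective_apply, hPhiA]
          exact h s hs
      have hYrank : Module.finrank ℂ Y = 1 := by
        have hmap : Submodule.map (Φe : M₂ →ₗ[ℂ] Module.Dual ℂ M₂) Y = S.dualAnnihilator := by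
          apply Submodule.map_comap_eq_self
          have hrg : LinearMap.range (Φe : M₂ →ₗ[ℂ] Module.Dual ℂ M₂) = ⊤ :=
            LinearMap.range_eq_top.mpr Φe.surjective
          rw [hrg]
          exact le_top
        have := LinearEquiv.finrank_map_eq Φe Y
        rw [hmap] at this
        omega
      have hYne : Y ≠ ⊥ := by
        intro h
        rw [h] at hYrank
        simp [finrank_bot] at hYrank
      obtain ⟨y, hyY, hy0⟩ := (Submodule.ne_bot_iff Y).mp hYne
      have hspan : Submodule.span ℂ {y} = Y :=
        Submodule.eq_of_le_of_finrank_eq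
          ((Submodule.span_singleton_le_iff_mem y Y).mpr hyY)
          (by rw [finrank_span_singleton hy0, hYrank])
      have hmuly : ∀ s ∈ S, ∃ c : ℂ, s * y = c • y := by
        intro s hs
        have hsy : s * y ∈ Y := by
          rw [hYmem]
          intro s' hs'
          rw [← mul_assoc]
          exact (hYmem y).mp hyY _ (hmul s' hs' s hs)
        rw [← hspan] at hsy
        obtain ⟨c, hc⟩ := Submodule.mem_span_singleton.mp hsy
        exact ⟨c, hc.symm⟩
      by_cases hdet : y.det = 0
      · -- invariant line = range of y
        set L := LinearMap.range y.mulVecLin with hLdef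
        have hfin2 : Module.finrank ℂ (Fin 2 → ℂ) = 2 := by simp
        have hrn := LinearMap.finrank_range_add_finrank_ker y.mulVecLin
        have hkne : LinearMap.ker y.mulVecLin ≠ ⊥ := by
          intro h
          have hinj : Function.Injective y.mulVec := by
            have := LinearMap.ker_eq_bot.mp h
            intro u v huv
            exact this (by simpa [Matrix.mulVecLin_apply] using huv)
          have := Matrix.mulVec_injective_iff_isUnit.mp hinj
          rw [Matrix.isUnit_iff_isUnit_det, hdet] at this
          exact (not_isUnit_zero : ¬ IsUnit (0 : ℂ)) this
        have hrne : L ≠ ⊥ := by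
          intro h
          apply hy0
          apply matrix_eq_of_mulVec (B := 0)
          intro v
          have : y.mulVecLin v ∈ L := LinearMap.mem_range_self _ v
          rw [h] at this
          simpa [Matrix.mulVecLin_apply] using this
        have hkpos : 0 < Module.finrank ℂ (LinearMap.ker y.mulVecLin) :=
          Nat.pos_of_ne_zero (fun h => hkne (Submodule.finrank_eq_zero.mp h))
        have hrpos : 0 < Module.finrank ℂ L :=
          Nat.pos_of_ne_zero (fun h => hrne (Submodule.finrank_eq_zero.mp h))
        have hL1 : Module.finrank ℂ L = 1 := by rw [hfin2, ← hLdef] at hrn; omega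
        refine hirr ⟨L, hL1, ?_⟩
        intro g u hu
        obtain ⟨t, rfl⟩ := hu
        obtain ⟨c, hc⟩ := hmuly _ (hmem g)
        rw [Matrix.mulVecLin_apply, Matrix.mulVec_mulVec, hc, Matrix.smul_mulVec,
          ← Matrix.mulVec_smul]
        exact ⟨c • t, by rw [Matrix.mulVecLin_apply]⟩
      · have hu : IsUnit y := by
          rw [Matrix.isUnit_iff_isUnit_det]
          exact isUnit_iff_ne_zero.mpr hdet
        obtain ⟨c, hc⟩ := hmuly a (hmem g₀)
        apply ha c
        calc a = a * (y * y⁻¹) := by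
                rw [Matrix.mul_nonsing_inv _ ((Matrix.isUnit_iff_isUnit_det y).mp hu), mul_one]
          _ = (a * y) * y⁻¹ := by rw [mul_assoc]
          _ = (c • y) * y⁻¹ := by rw [hc]
          _ = c • (y * y⁻¹) := by rw [smul_mul_assoc]
          _ = c • 1 := by rw [Matrix.mul_nonsing_inv _ ((Matrix.isUnit_iff_isUnit_det y).mp hu)]

end
theorem sl2_irreducible_equal_trace_conjugate
    {G : Type*} [Group G]
    (ρ₁ ρ₂ : G →* Matrix.SpecialLinearGroup (Fin 2) ℂ)
    (htr : ∀ g : G,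
      Matrix.trace ((ρ₁ g : Matrix (Fin 2) (Fin 2) ℂ)) =
        Matrix.trace ((ρ₂ g : Matrix (Fin 2) (Fin 2) ℂ)))
    (hirr : ¬ ∃ L : Submodule ℂ (Fin 2 → ℂ),
      Module.finrank ℂ L = 1 ∧
        ∀ g : G, ∀ v ∈ L, Matrix.mulVec ((ρ₁ g : Matrix (Fin 2) (Fin 2) ℂ)) v ∈ L) :
    ∃ C : Matrix (Fin 2) (Fin 2) ℂ, IsUnit C ∧
      ∀ g : G, (ρ₂ g : Matrix (Fin 2) (Fin 2) ℂ) =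
        C * (ρ₁ g : Matrix (Fin 2) (Fin 2) ℂ) * C⁻¹ := by
  classical
  set π : G → M₂ × M₂ := fun g => ((ρ₁ g : M₂), (ρ₂ g : M₂)) with hπ
  set A : Submodule ℂ (M₂ × M₂) := Submodule.span ℂ (Set.range π) with hA
  have hπmem : ∀ g, π g ∈ A := fun g => Submodule.subset_span ⟨g, rfl⟩
  have hmulA : ∀ p ∈ A, ∀ q ∈ A, p * q ∈ A := by
    have claim1 : ∀ p ∈ A, ∀ x ∈ Set.range π, p * x ∈ A := by
      intro p hp x hx
      obtain ⟨h, rfl⟩ := hx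
      induction hp using Submodule.span_induction with
      | mem z hz =>
          obtain ⟨g, rfl⟩ := hz
          apply Submodule.subset_span
          refine ⟨g * h, ?_⟩
          simp [hπ, Prod.ext_iff]
      | zero => simp
      | add u v hu hv hu' hv' => rw [add_mul]; exact A.add_mem hu' hv'
      | smul c u hu hu' => rw [smul_mul_assoc]; exact A.smul_mem c hu'
    intro p hp q hq
    induction hq using Submodule.span_induction with
    | mem z hz => exact claim1 p hp z hz
    | zero => simp
    | add u v hu hv hu' hv' => rw [mul_add]; exact A.add_mem hu' hv'
    | smul c u hu hu' => rw [mul_smul_comm]; exact A.smul_mem c hu'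
  have htrA : ∀ p ∈ A, Matrix.trace p.1 = Matrix.trace p.2 := by
    intro p hp
    induction hp using Submodule.span_induction with
    | mem x hx => obtain ⟨g, rfl⟩ := hx; exact htr g
    | zero => simp
    | add x y hx hy hx' hy' => simp only [Prod.fst_add, Prod.snd_add, Matrix.trace_add, hx', hy']
    | smul c x hx hx' => simp only [Prod.smul_fst, Prod.smul_snd, Matrix.trace_smul, hx']
  have hspanS : Submodule.span ℂ (Set.range fun g => (ρ₁ g : M₂)) = ⊤ :=
    burnside_span ρ₁ (span_mul_closed ρ₁) PhiTr_bijective PhiTr_apply eq_zero_of_trace_mul hirr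
  have hfstmap : Submodule.map (LinearMap.fst ℂ M₂ M₂) A = ⊤ := by
    rw [hA, Submodule.map_span, ← Set.range_comp]
    exact hspanS
  have hsurj : ∀ x : M₂, ∃ p, p ∈ A ∧ p.1 = x := by
    intro x
    have hx : x ∈ Submodule.map (LinearMap.fst ℂ M₂ M₂) A := by rw [hfstmap]; trivial
    obtain ⟨p, hp, hpx⟩ := hx
    exact ⟨p, hp, hpx⟩
  have hsnd0 : ∀ p ∈ A, p.2 = 0 → p.1 = 0 := by
    intro p hp h2
    apply eq_zero_of_trace_mul
    intro x
    obtain ⟨q, hq, rfl⟩ := hsurj x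
    have hpq := htrA _ (hmulA p hp q hq)
    rw [Prod.fst_mul, Prod.snd_mul, h2, zero_mul] at hpq
    rw [Matrix.trace_mul_comm]
    simpa using hpq
  have hfin4 : Module.finrank ℂ (Matrix (Fin 2) (Fin 2) ℂ) = 4 := by
    simp [Module.finrank_matrix]
  have hAle : Module.finrank ℂ A ≤ 4 := by
    set φs := (LinearMap.snd ℂ M₂ M₂).comp A.subtype with hφs
    have hker : LinearMap.ker φs = ⊥ := by
      refine (Submodule.eq_bot_iff _).mpr fun x hx => ?_
      have h2 : (x : M₂ × M₂).2 = 0 := hx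
      have h1 : (x : M₂ × M₂).1 = 0 := hsnd0 _ x.2 h2
      exact Subtype.ext (Prod.ext h1 h2)
    have h := LinearMap.finrank_range_add_finrank_ker φs
    rw [hker, finrank_bot, add_zero] at h
    rw [← h]
    exact (Submodule.finrank_le _).trans (le_of_eq hfin4)
  have hAge : 4 ≤ Module.finrank ℂ A := by
    have h := Submodule.finrank_map_le (LinearMap.fst ℂ M₂ M₂) A
    rw [hfstmap, finrank_top, hfin4] at h
    exact h
  have hfst0 : ∀ p ∈ A, p.1 = 0 → p.2 = 0 := by
    set φf := (LinearMap.fst ℂ M₂ M₂).comp A.subtype with hφf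
    have hrange : LinearMap.range φf = ⊤ := by
      rw [LinearMap.range_eq_top]
      intro x
      obtain ⟨p, hp, hpx⟩ := hsurj x
      exact ⟨⟨p, hp⟩, hpx⟩
    have hker : Module.finrank ℂ (LinearMap.ker φf) = 0 := by
      have h := LinearMap.finrank_range_add_finrank_ker φf
      rw [hrange, finrank_top, hfin4] at h
      omega
    have hkerbot : LinearMap.ker φf = ⊥ := Submodule.finrank_eq_zero.mp hker
    intro p hp h1
    have hx : (⟨p, hp⟩ : A) ∈ LinearMap.ker φf := by
      simp only [hφf, LinearMap.mem_ker, LinearMap.comp_apply, Submodule.coe_subtype,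
        LinearMap.fst_apply]
      exact h1
    rw [hkerbot, Submodule.mem_bot] at hx
    have hp0 : p = 0 := congrArg Subtype.val hx
    rw [hp0]
    rfl
  have hinj : ∀ p ∈ A, ∀ q ∈ A, p.1 = q.1 → p.2 = q.2 := by
    intro p hp q hq h
    have hmem : p - q ∈ A := A.sub_mem hp hq
    have h0 : (p - q).2 = 0 := by
      apply hfst0 _ hmem
      rw [Prod.fst_sub, h, sub_self]
    rw [Prod.snd_sub] at h0
    exact sub_eq_zero.mp h0
  choose pfun hpA hp1 using hsurj
  set φ : M₂ → M₂ := fun x => (pfun x).2 with hφ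
  have hφval : ∀ p ∈ A, φ p.1 = p.2 := by
    intro p hp
    have := hinj _ (hpA p.1) _ hp (hp1 p.1)
    simpa [hφ] using this
  have hφmul : ∀ x y : M₂, φ (x * y) = φ x * φ y := by
    intro x y
    have h := hφval _ (hmulA _ (hpA x) _ (hpA y))
    rw [Prod.fst_mul, Prod.snd_mul, hp1, hp1] at h
    exact h
  have hφadd : ∀ x y : M₂, φ (x + y) = φ x + φ y := by
    intro x y
    have h := hφval _ (A.add_mem (hpA x) (hpA y))
    rw [Prod.fst_add, Prod.snd_add, hp1, hp1] at h
    exact h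
  have hφsmul : ∀ (c : ℂ) (x : M₂), φ (c • x) = c • φ x := by
    intro c x
    have h := hφval _ (A.smul_mem c (hpA x))
    rw [Prod.smul_fst, Prod.smul_snd, hp1] at h
    exact h
  have hφρ : ∀ g, φ (ρ₁ g : M₂) = (ρ₂ g : M₂) := fun g => hφval _ (hπmem g)
  set e : M₂ := Matrix.single (0 : Fin 2) (0 : Fin 2) (1 : ℂ) with he
  have hee : e * e = e := by rw [he, Matrix.single_mul_single_same, mul_one]
  have hfidem : φ e * φ e = φ e := by rw [← hφmul, hee]
  have hftr : Matrix.trace (φ e) = 1 := by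
    have h := htrA _ (hpA e)
    rw [hp1] at h
    rw [hφ, ← h, he, Matrix.trace_single_eq_same]
  have hfne : φ e ≠ 0 := by
    intro h
    rw [h, Matrix.trace_zero] at hftr
    exact one_ne_zero hftr.symm
  obtain ⟨u, hu⟩ : ∃ u, (φ e) *ᵥ u ≠ 0 := by
    by_contra h
    push_neg at h
    exact hfne (matrix_eq_of_mulVec (B := 0) fun v => by
      rw [Matrix.zero_mulVec]; exact h v)
  set w := (φ e) *ᵥ u with hwdef
  have hw0 : w ≠ 0 := hu
  have hfw : (φ e) *ᵥ w = w := by rw [hwdef, Matrix.mulVec_mulVec, hfidem]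
  set colM : (Fin 2 → ℂ) → M₂ := fun v => Matrix.of (fun i j => if j = 0 then v i else 0)
    with hcolM
  have hcol_mul : ∀ (x : M₂) v, colM (x *ᵥ v) = x * colM v := by
    intro x v
    ext i j
    by_cases hj : j = 0 <;>
      simp [hcolM, Matrix.mul_apply, Matrix.mulVec, dotProduct, hj] <;>
      fin_cases i <;> simp
  have hcol_add : ∀ v v', colM (v + v') = colM v + colM v' := by
    intro v v'
    ext i j
    by_cases hj : j = 0 <;> simp [hcolM, hj]
  have hcol_smul : ∀ (c : ℂ) v, colM (c • v) = c • colM v := by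
    intro c v
    ext i j
    by_cases hj : j = 0 <;> simp [hcolM, hj]
  have hcole : colM (Pi.single 0 1) = e := by
    ext i j
    fin_cases i <;> fin_cases j <;> simp [hcolM, he, Matrix.single, Pi.single]
  set ℓ : (Fin 2 → ℂ) →ₗ[ℂ] (Fin 2 → ℂ) :=
    { toFun := fun v => (φ (colM v)) *ᵥ w
      map_add' := fun v v' => by
        show (φ (colM (v + v'))) *ᵥ w = (φ (colM v)) *ᵥ w + (φ (colM v')) *ᵥ w
        rw [hcol_add, hφadd, Matrix.add_mulVec]
      map_smul' := fun c v => by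
        show (φ (colM (c • v))) *ᵥ w = c • ((φ (colM v)) *ᵥ w)
        rw [hcol_smul, hφsmul, Matrix.smul_mulVec] } with hℓ
  have hℓapp : ∀ v, ℓ v = (φ (colM v)) *ᵥ w := fun v => rfl
  have hkey : ∀ (x : M₂) v, ℓ (x *ᵥ v) = (φ x) *ᵥ (ℓ v) := by
    intro x v
    rw [hℓapp, hℓapp, hcol_mul, hφmul, ← Matrix.mulVec_mulVec]
  have hℓe : ℓ (Pi.single 0 1) = w := by rw [hℓapp, hcole, hfw]
  have hℓinj : Function.Injective ℓ := by
    rw [← LinearMap.ker_eq_bot]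
    refine (Submodule.eq_bot_iff _).mpr fun v hv => ?_
    by_contra hv0
    obtain ⟨i, hi⟩ : ∃ i, v i ≠ 0 := by
      by_contra h
      push_neg at h
      exact hv0 (funext h)
    have hall : ∀ u' : Fin 2 → ℂ, ℓ u' = 0 := by
      intro u'
      set x : M₂ := Matrix.of (fun a b => if b = i then u' a / v i else 0) with hx
      have hxv : x *ᵥ v = u' := by
        ext a
        simp only [hx, Matrix.mulVec, dotProduct, Matrix.of_apply, ite_mul, zero_mul]
        rw [Finset.sum_ite_eq' Finset.univ i (fun b => u' a / v i * v b)]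
        simp [div_mul_cancel₀ _ hi]
      have hkerv : ℓ v = 0 := hv
      rw [← hxv, hkey, hkerv, Matrix.mulVec_zero]
    have h0 := hall (Pi.single 0 1)
    rw [hℓe] at h0
    exact hw0 h0
  have hℓsurj : Function.Surjective ℓ := LinearMap.injective_iff_surjective.mp hℓinj
  set E := LinearEquiv.ofBijective ℓ ⟨hℓinj, hℓsurj⟩ with hE
  set C := LinearMap.toMatrix' ℓ with hC
  set D := LinearMap.toMatrix' (E.symm : (Fin 2 → ℂ) →ₗ[ℂ] (Fin 2 → ℂ)) with hD
  have hEapp : ∀ v, E v = ℓ v := fun v => rfl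
  have hCD : C * D = 1 := by
    rw [hC, hD, ← LinearMap.toMatrix'_comp]
    have hcomp : ℓ ∘ₗ (E.symm : (Fin 2 → ℂ) →ₗ[ℂ] (Fin 2 → ℂ)) = LinearMap.id := by
      apply LinearMap.ext
      intro v
      simp only [LinearMap.comp_apply, LinearMap.id_apply]
      rw [← hEapp]
      exact E.apply_symm_apply v
    rw [hcomp, LinearMap.toMatrix'_id]
  have hDC : D * C = 1 := by
    rw [hC, hD, ← LinearMap.toMatrix'_comp]
    have hcomp : (E.symm : (Fin 2 → ℂ) →ₗ[ℂ] (Fin 2 → ℂ)) ∘ₗ ℓ = LinearMap.id := by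
      apply LinearMap.ext
      intro v
      simp only [LinearMap.comp_apply, LinearMap.id_apply]
      rw [← hEapp v]
      exact E.symm_apply_apply v
    rw [hcomp, LinearMap.toMatrix'_id]
  have hCunit : IsUnit C := ⟨⟨C, D, hCD, hDC⟩, rfl⟩
  have hCmulVec : ∀ v, C *ᵥ v = ℓ v := by
    intro v
    rw [hC, ← Matrix.toLin'_apply, Matrix.toLin'_toMatrix']
  have hCx : ∀ x : M₂, C * x = φ x * C := by
    intro x
    apply matrix_eq_of_mulVec
    intro v
    rw [← Matrix.mulVec_mulVec, ← Matrix.mulVec_mulVec, hCmulVec, hCmulVec, hkey]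
  refine ⟨C, hCunit, ?_⟩
  intro g
  have hCg : C * (ρ₁ g : M₂) = (ρ₂ g : M₂) * C := by rw [hCx, hφρ]
  have hdet : IsUnit C.det := (Matrix.isUnit_iff_isUnit_det C).mp hCunit
  calc (ρ₂ g : M₂) = (ρ₂ g : M₂) * (C * C⁻¹) := by
        rw [Matrix.mul_nonsing_inv _ hdet, mul_one]
    _ = ((ρ₂ g : M₂) * C) * C⁻¹ := by rw [mul_assoc]
    _ = (C * (ρ₁ g : M₂)) * C⁻¹ := by rw [hCg]
end
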